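/- Boundedness of the proportional block output: if the inputs satisfy x_{E+}(t), x_{E−}(t) ≤ B for all t ≥ 0, then any nonnegative solution of the proportional block ODEs with x_{P±}(0) ≤ r·B satisfies x_{P+}(t), x_{P−}(t) ≤ r·B for all t ≥ 0. -/

import Mathlib

/-- Comparison lemma: if `f' t ≤ s * (C - f t)` on `[0, ∞)` and `f 0 ≤ C`,
then `f t ≤ C` for all `t ≥ 0`. -/
lemma comparison_le (f d : ℝ → ℝ) (s C : ℝ) (hs : 0 < s)
    (hf : ∀ t, 0 ≤ t → HasDerivAt f (d t) t)
    (hd : ∀ t, 0 ≤ t → d t ≤ s * (C - f t))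
    (h0 : f 0 ≤ C) : ∀ t, 0 ≤ t → f t ≤ C := by
  set g : ℝ → ℝ := fun t => Real.exp (s * t) * (f t - C) with hg
  have hanti : AntitoneOn g (Set.Ici 0) := by
    apply antitoneOn_of_deriv_nonpos (convex_Ici 0)
    · exact fun t ht => (((Real.continuous_exp.comp (continuous_const.mul continuous_id)).continuousAt).mul
        (((hf t ht).continuousAt).sub continuousAt_const)).continuousWithinAt
    · intro t ht
      rw [interior_Ici] at ht
      have ht' : (0:ℝ) ≤ t := le_of_lt ht
      have hde : HasDerivAt (fun t => Real.exp (s * t)) (s * Real.exp (s * t)) t := by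
        have := (Real.hasDerivAt_exp (s * t)).comp t ((hasDerivAt_id t).const_mul s)
        simpa [mul_comm, Function.comp_def] using this
      exact ((hde.mul ((hf t ht').sub_const C)).differentiableAt).differentiableWithinAt
    · intro t ht
      rw [interior_Ici] at ht
      have ht' : (0:ℝ) ≤ t := le_of_lt ht
      have hde : HasDerivAt (fun t => Real.exp (s * t)) (s * Real.exp (s * t)) t := by
        have := (Real.hasDerivAt_exp (s * t)).comp t ((hasDerivAt_id t).const_mul s)
        simpa [mul_comm, Function.comp_def] using this
      have hgd : HasDerivAt g (s * Real.exp (s * t) * (f t - C) + Real.exp (s * t) * d t) t :=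
        hde.mul ((hf t ht').sub_const C)
      rw [hgd.deriv]
      have hdle := hd t ht'
      have hexp : 0 < Real.exp (s * t) := Real.exp_pos _
      nlinarith [hexp.le]
  intro t ht
  have := hanti (Set.self_mem_Ici) ht ht
  have hexp : 0 < Real.exp (s * t) := Real.exp_pos _
  simp only [hg, mul_zero, Real.exp_zero, one_mul] at this
  nlinarith

/-- Boundedness of the proportional block output: if the inputs are bounded by B and
the nonnegative solution starts below r·B, it stays below r·B. -/
theorem proportional_block_bounded
    (xEp xEm xPp xPm : ℝ → ℝ) (r s q B : ℝ)
    (hr : 0 ≤ r) (hs : 0 < s) (hq : 0 < q) (hB : 0 ≤ B)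
    (hEp_bdd : ∀ t, 0 ≤ t → xEp t ≤ B) (hEm_bdd : ∀ t, 0 ≤ t → xEm t ≤ B)
    (hEp_nonneg : ∀ t, 0 ≤ t → 0 ≤ xEp t) (hEm_nonneg : ∀ t, 0 ≤ t → 0 ≤ xEm t)
    (hP_nonneg : ∀ t, 0 ≤ t → 0 ≤ xPp t ∧ 0 ≤ xPm t)
    (hPp : ∀ t, 0 ≤ t →
      HasDerivAt xPp (r * s * xEp t - s * xPp t - q * xPp t * xPm t) t)
    (hPm : ∀ t, 0 ≤ t →
      HasDerivAt xPm (r * s * xEm t - s * xPm t - q * xPp t * xPm t) t)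
    (hPp0 : xPp 0 ≤ r * B) (hPm0 : xPm 0 ≤ r * B) :
    ∀ t, 0 ≤ t → xPp t ≤ r * B ∧ xPm t ≤ r * B := by
  intro t ht
  constructor
  · refine comparison_le xPp _ s (r * B) hs hPp ?_ hPp0 t ht
    intro u hu
    have h1 := hEp_bdd u hu
    have h2 := (hP_nonneg u hu).1
    have h3 := (hP_nonneg u hu).2
    nlinarith [mul_nonneg hq.le (mul_nonneg h2 h3), mul_le_mul_of_nonneg_left h1 (mul_nonneg hr hs.le)]
  · refine comparison_le xPm _ s (r * B) hs hPm ?_ hPm0 t ht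
    intro u hu
    have h1 := hEm_bdd u hu
    have h2 := (hP_nonneg u hu).1
    have h3 := (hP_nonneg u hu).2
    nlinarith [mul_nonneg hq.le (mul_nonneg h2 h3), mul_le_mul_of_nonneg_left h1 (mul_nonneg hr hs.le)]
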